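/- Let (W,S,c) be a Coxeter triple. The lattice of order ideals of the natural partial order (L_{w₀^c}, ≺_{w₀^c}) on the letters of the c-sorting word of the longest element is isomorphic, as a partially ordered set, to the set of c-singletons ordered by the weak order. In particular, the poset of c-singletons under weak order is a distributive lattice. -/

import Mathlib

open CoxeterSystem

namespace Cambrian

variable {B : Type*} {W : Type*} [Group W]

/-- A single commutation move on words: swap two adjacent letters whose generators commute. -/
def CommStep (M : CoxeterMatrix B) (l₁ l₂ : List B) : Prop :=
  ∃ (u v : List B) (i j : B), M i j = 2 ∧ l₁ = u ++ i :: j :: v ∧ l₂ = u ++ j :: i :: v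

/-- Two words coincide up to commutations. -/
def CommEquiv (M : CoxeterMatrix B) : List B → List B → Prop :=
  Relation.ReflTransGen (CommStep M)

/-- `u` is a prefix of `v` up to commutations. -/
def IsPrefixUpToComm (M : CoxeterMatrix B) (u v : List B) : Prop :=
  ∃ v', CommEquiv M v v' ∧ u <+: v'

/-- A word representing a Coxeter element: each generator occurs exactly once. -/
def IsCoxWord (cw : List B) : Prop := cw.Nodup ∧ ∀ b : B, b ∈ cw

variable {M : CoxeterMatrix B}

/-- Greedy computation of the lexicographically first reduced subword of `c^∞`
representing a given element (fuelled recursion). -/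
noncomputable def sortAux (cs : CoxeterSystem M W) (cw : List B) :
    ℕ → List B → W → List B
  | 0, _, _ => []
  | n + 1, [], g => sortAux cs cw n cw g
  | n + 1, s :: rest, g =>
      if cs.length (cs.simple s * g) < cs.length g then
        s :: sortAux cs cw n rest (cs.simple s * g)
      else sortAux cs cw n rest g

/-- The `c`-sorting word of `w`: the lexicographically first subword of `c^∞`
that is a reduced word for `w`. -/
noncomputable def sortingWord (cs : CoxeterSystem M W) (cw : List B) (w : W) : List B :=
  sortAux cs cw ((cs.length w + 1) * (cw.length + 1)) cw w

/-- `w` is a `c`-singleton: some reduced expression of `w` is a prefix up to commutations of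
the `c`-sorting word of the longest element `w₀`. -/
def IsCSingleton (cs : CoxeterSystem M W) (cw : List B) (w₀ w : W) : Prop :=
  ∃ u : List B, cs.wordProd u = w ∧ cs.IsReduced u ∧
    IsPrefixUpToComm M u (sortingWord cs cw w₀)

/-- The cardinality `S_c` of the Cambrian acyclic domain: the number of `c`-singletons. -/
noncomputable def numSingletons (cs : CoxeterSystem M W) (cw : List B) (w₀ : W) : ℕ :=
  Nat.card {w : W // IsCSingleton cs cw w₀ w}

/-- The natural partial order (heap order) on the letters of a word `w`: one letter precedes
another if they are joined by a chain of letters, increasing in position, in which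
consecutive letters represent non-commuting generators. -/
def npo (M : CoxeterMatrix B) (w : List B) : Fin w.length → Fin w.length → Prop :=
  Relation.TransGen (fun a b => a < b ∧ M (w.get a) (w.get b) ≠ 2)

/-- An order ideal (down-set) of the natural partial order on the letters of `w`. -/
def IsOrderIdeal (M : CoxeterMatrix B) (w : List B) (I : Set (Fin w.length)) : Prop :=
  ∀ a b : Fin w.length, npo M w a b → b ∈ I → a ∈ I

/-- The (right) weak order on `W`: `u ≤ w` iff `ℓ(u) + ℓ(u⁻¹w) = ℓ(w)`. -/
def WeakLe (cs : CoxeterSystem M W) (u w : W) : Prop :=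
  cs.length u + cs.length (u⁻¹ * w) = cs.length w


section Aux
open List
attribute [local instance] Classical.propDecidable


/-- commuting simple reflections -/
theorem simple_comm (cs : CoxeterSystem M W) {i j : B} (h : M i j = 2) :
    cs.simple i * cs.simple j = cs.simple j * cs.simple i := by
  have := cs.simple_mul_simple_pow i j
  rw [h] at this
  have h2 : (cs.simple i * cs.simple j) * (cs.simple i * cs.simple j) = 1 := by
    rw [← sq]; exact this
  calc cs.simple i * cs.simple j = (cs.simple i * cs.simple j)⁻¹ := by
        rw [eq_inv_iff_mul_eq_one]; exact h2
    _ = cs.simple j * cs.simple i := by rw [mul_inv_rev, cs.inv_simple, cs.inv_simple]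

theorem wordProd_comm (cs : CoxeterSystem M W) {x : B} {l : List B}
    (h : ∀ y ∈ l, M x y = 2) :
    cs.simple x * cs.wordProd l = cs.wordProd l * cs.simple x := by
  induction l with
  | nil => simp
  | cons y t ih =>
      rw [cs.wordProd_cons, ← mul_assoc, simple_comm cs (h y (by simp)), mul_assoc,
        ih (fun z hz => h z (by simp [hz])), ← mul_assoc]

/-- The subword of `l` (whose letters occupy absolute positions `n, n+1, ...`)
consisting of letters at positions in `S`. -/
noncomputable def subw (S : Set ℕ) : ℕ → List B → List B
  | _, [] => []
  | n, x :: l => if n ∈ S then x :: subw S (n+1) l else subw S (n+1) l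

@[simp] theorem subw_nil (S : Set ℕ) (n : ℕ) : (subw S n ([] : List B)) = [] := rfl

theorem subw_cons (S : Set ℕ) (n : ℕ) (x : B) (l : List B) :
    subw S n (x :: l) = if n ∈ S then x :: subw S (n+1) l else subw S (n+1) l := rfl

theorem subw_cons_mem {S : Set ℕ} {n : ℕ} (h : n ∈ S) (x : B) (l : List B) :
    subw S n (x :: l) = x :: subw S (n+1) l := by rw [subw_cons, if_pos h]

theorem subw_cons_not_mem {S : Set ℕ} {n : ℕ} (h : n ∉ S) (x : B) (l : List B) :
    subw S n (x :: l) = subw S (n+1) l := by rw [subw_cons, if_neg h]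

theorem subw_congr {S T : Set ℕ} : ∀ (l : List B) (n : ℕ),
    (∀ k, k < l.length → ((n + k) ∈ S ↔ (n + k) ∈ T)) → subw S n l = subw T n l := by
  intro l
  induction l with
  | nil => intro n _; rfl
  | cons x t ih =>
      intro n h
      have h0 : n ∈ S ↔ n ∈ T := by simpa using h 0 (by simp)
      have ht : subw S (n+1) t = subw T (n+1) t := by
        apply ih
        intro k hk
        have := h (k+1) (by simpa using Nat.succ_lt_succ hk)
        simpa [Nat.add_assoc, Nat.add_comm 1 k] using this
      by_cases hn : n ∈ S
      · rw [subw_cons_mem hn, subw_cons_mem (h0.mp hn), ht]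
      · rw [subw_cons_not_mem hn, subw_cons_not_mem (fun hc => hn (h0.mpr hc)), ht]

/-- shift a set of positions down by one -/
def shf (S : Set ℕ) : Set ℕ := {b | b + 1 ∈ S}

theorem subw_shift (S : Set ℕ) : ∀ (l : List B) (n : ℕ),
    subw S (n+1) l = subw (shf S) n l := by
  intro l
  induction l with
  | nil => intro n; rfl
  | cons x t ih =>
      intro n
      have : (n ∈ shf S) = (n + 1 ∈ S) := rfl
      by_cases hn : n + 1 ∈ S
      · rw [subw_cons_mem hn, subw_cons_mem (show n ∈ shf S from hn), ih]
      · rw [subw_cons_not_mem hn, subw_cons_not_mem (show n ∉ shf S from hn), ih]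

theorem subw_univ : ∀ (l : List B) (n : ℕ), subw Set.univ n l = l := by
  intro l
  induction l with
  | nil => intro n; rfl
  | cons x t ih => intro n; rw [subw_cons_mem (Set.mem_univ n), ih]

theorem subw_lt (k : ℕ) : ∀ (l : List B) (n : ℕ), subw {b | b < k} n l = l.take (k - n) := by
  intro l
  induction l with
  | nil => intro n; simp
  | cons x t ih =>
      intro n
      by_cases hn : n < k
      · rw [subw_cons_mem (show n ∈ {b | b < k} from hn), ih]
        have : k - n = (k - (n+1)) + 1 := by omega
        rw [this]
        rfl
      · rw [subw_cons_not_mem (show n ∉ {b | b < k} from hn), ih]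
        have h1 : k - n = 0 := by omega
        have h2 : k - (n+1) = 0 := by omega
        rw [h1, h2]
        simp

theorem mem_subw {S : Set ℕ} : ∀ {l : List B} {n : ℕ} {y : B}, y ∈ subw S n l →
    ∃ k, ∃ (hk : k < l.length), (n + k) ∈ S ∧ y = l[k] := by
  intro l
  induction l with
  | nil => intro n y h; simp at h
  | cons x t ih =>
      intro n y h
      by_cases hn : n ∈ S
      · rw [subw_cons_mem hn] at h
        rcases List.mem_cons.mp h with h | h
        · exact ⟨0, by simp, by simpa using hn, by simp [h]⟩
        · obtain ⟨k, hk, hks, hky⟩ := ih h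
          rw [show (n+1) + k = n + (k+1) by omega] at hks
          exact ⟨k+1, by simpa using Nat.succ_lt_succ hk, hks, by simpa using hky⟩
      · rw [subw_cons_not_mem hn] at h
        obtain ⟨k, hk, hks, hky⟩ := ih h
        rw [show (n+1) + k = n + (k+1) by omega] at hks
        exact ⟨k+1, by simpa using Nat.succ_lt_succ hk, hks, by simpa using hky⟩

theorem subw_mem {S : Set ℕ} : ∀ {l : List B} {n k : ℕ} (hk : k < l.length),
    (n + k) ∈ S → l[k] ∈ subw S n l := by
  intro l
  induction l with
  | nil => intro n k hk; simp at hk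
  | cons x t ih =>
      intro n k hk hs
      match k with
      | 0 =>
          rw [subw_cons_mem (by simpa using hs)]
          simp
      | k+1 =>
          have hk' : k < t.length := by simpa using Nat.lt_of_succ_lt_succ hk
          have hs' : (n + 1) + k ∈ S := by
            have : n + (k+1) = (n+1) + k := by omega
            rwa [this] at hs
          have := ih hk' hs'
          by_cases hn : n ∈ S
          · rw [subw_cons_mem hn]; exact List.mem_cons_of_mem _ (by simpa using this)
          · rw [subw_cons_not_mem hn]; simpa using this

theorem length_subw_le {S : Set ℕ} : ∀ (l : List B) (n : ℕ), (subw S n l).length ≤ l.length := by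
  intro l
  induction l with
  | nil => intro n; simp
  | cons x t ih =>
      intro n
      by_cases hn : n ∈ S
      · rw [subw_cons_mem hn]; simpa using ih (n+1)
      · rw [subw_cons_not_mem hn]; simp; exact le_trans (ih (n+1)) (by simp)

theorem length_subw_add {S T : Set ℕ} : ∀ (l : List B) (n : ℕ),
    (∀ k, k < l.length → ¬((n + k) ∈ S ∧ (n + k) ∈ T)) →
    (subw (S ∪ T) n l).length = (subw S n l).length + (subw T n l).length := by
  intro l
  induction l with
  | nil => intro n _; simp
  | cons x t ih =>
      intro n h
      have h0 := h 0 (by simp)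
      simp only [Nat.add_zero] at h0
      have ht := ih (n+1) (fun k hk => by
        have := h (k+1) (by simpa using Nat.succ_lt_succ hk)
        rwa [show n + (k+1) = (n+1)+k by omega] at this)
      by_cases hs : n ∈ S
      · have hnt : n ∉ T := fun hc => h0 ⟨hs, hc⟩
        rw [subw_cons_mem (show n ∈ S ∪ T from Or.inl hs), subw_cons_mem hs,
          subw_cons_not_mem hnt]
        simp [ht]; omega
      · by_cases htt : n ∈ T
        · rw [subw_cons_mem (show n ∈ S ∪ T from Or.inr htt), subw_cons_not_mem hs,
            subw_cons_mem htt]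
          simp [ht]; omega
        · rw [subw_cons_not_mem (show n ∉ S ∪ T by rintro (h|h) <;> [exact hs h; exact htt h]),
            subw_cons_not_mem hs, subw_cons_not_mem htt, ht]

theorem subw_append (S : Set ℕ) : ∀ (l₁ l₂ : List B) (n : ℕ),
    subw S n (l₁ ++ l₂) = subw S n l₁ ++ subw S (n + l₁.length) l₂ := by
  intro l₁
  induction l₁ with
  | nil => intro l₂ n; simp
  | cons x t ih =>
      intro l₂ n
      by_cases hn : n ∈ S
      · rw [cons_append, subw_cons_mem hn, subw_cons_mem hn, ih, cons_append]
        simp [Nat.add_assoc, Nat.add_comm 1]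
      · rw [cons_append, subw_cons_not_mem hn, subw_cons_not_mem hn, ih]
        simp [Nat.add_assoc, Nat.add_comm 1]

/-- heap (natural partial order) step on absolute positions -/
def hstep (M : CoxeterMatrix B) (w : List B) (a b : ℕ) : Prop :=
  ∃ (ha : a < w.length) (hb : b < w.length), a < b ∧ M (w[a]) (w[b]) ≠ 2

def hrel (M : CoxeterMatrix B) (w : List B) : ℕ → ℕ → Prop :=
  Relation.TransGen (hstep M w)

def HIdeal (M : CoxeterMatrix B) (w : List B) (S : Set ℕ) : Prop :=
  ∀ a b, hrel M w a b → b ∈ S → a ∈ S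

theorem hstep_lt {w : List B} {a b : ℕ} (h : hstep M w a b) : a < b := by
  obtain ⟨_, _, h, _⟩ := h; exact h

theorem hrel_lt {w : List B} {a b : ℕ} (h : hrel M w a b) : a < b := by
  induction h with
  | single h => exact hstep_lt h
  | tail _ h ih => exact lt_trans ih (hstep_lt h)

theorem hrel_bounds {w : List B} {a b : ℕ} (h : hrel M w a b) :
    a < w.length ∧ b < w.length := by
  induction h with
  | single h => obtain ⟨ha, hb, _, _⟩ := h; exact ⟨ha, hb⟩
  | tail _ h ih => obtain ⟨_, hb, _, _⟩ := h; exact ⟨ih.1, hb⟩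

theorem hstep_cons_succ {x : B} {w : List B} {a b : ℕ} :
    hstep M (x :: w) (a+1) (b+1) ↔ hstep M w a b := by
  constructor
  · rintro ⟨ha, hb, hab, hM⟩
    exact ⟨by simpa using Nat.lt_of_succ_lt_succ ha, by simpa using Nat.lt_of_succ_lt_succ hb,
      Nat.lt_of_succ_lt_succ hab, by simpa using hM⟩
  · rintro ⟨ha, hb, hab, hM⟩
    exact ⟨by simpa using Nat.succ_lt_succ ha, by simpa using Nat.succ_lt_succ hb,
      Nat.succ_lt_succ hab, by simpa using hM⟩

theorem hrel_cons_of_hrel {x : B} {w : List B} {a b : ℕ} (h : hrel M w a b) :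
    hrel M (x :: w) (a+1) (b+1) := by
  induction h with
  | single h => exact Relation.TransGen.single (hstep_cons_succ.mpr h)
  | tail _ h ih => exact Relation.TransGen.tail ih (hstep_cons_succ.mpr h)

theorem hrel_of_hrel_cons_succ {x : B} {w : List B} {a : ℕ} {q : ℕ}
    (h : hrel M (x :: w) (a+1) q) : ∀ b, q = b + 1 → hrel M w a b := by
  induction h with
  | single h =>
      intro b hb
      subst hb
      exact Relation.TransGen.single (hstep_cons_succ.mp h)
  | tail h1 h2 ih =>
      rename_i mid q'
      intro b hb
      subst hb
      have hmid : mid ≠ 0 := by have := hrel_lt h1; omega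
      obtain ⟨m, rfl⟩ := Nat.exists_eq_succ_of_ne_zero hmid
      exact Relation.TransGen.tail (ih m rfl) (hstep_cons_succ.mp h2)

theorem hrel_cons_succ {x : B} {w : List B} {a b : ℕ} :
    hrel M (x :: w) (a+1) (b+1) ↔ hrel M w a b :=
  ⟨fun h => hrel_of_hrel_cons_succ h b rfl, hrel_cons_of_hrel⟩

theorem hrel_zero_cases {x : B} {w : List B} {q : ℕ} (h : hrel M (x :: w) 0 q) :
    ∃ c, ∃ (hc : c < w.length), M x (w[c]) ≠ 2 ∧
      (c + 1 = q ∨ ∃ b, q = b + 1 ∧ hrel M w c b) := by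
  induction h with
  | single h =>
      rename_i q
      obtain ⟨h0, hq, hlt, hM⟩ := h
      obtain ⟨c, rfl⟩ := Nat.exists_eq_succ_of_ne_zero (show q ≠ 0 by omega)
      exact ⟨c, by simpa using hq, by simpa using hM, Or.inl rfl⟩
  | tail h1 h2 ih =>
      rename_i mid q'
      obtain ⟨d, hd, hM, hOr⟩ := ih
      have hmid : mid ≠ 0 := by have := hrel_lt h1; omega
      obtain ⟨m, rfl⟩ := Nat.exists_eq_succ_of_ne_zero hmid
      have hq' : q' ≠ 0 := by have := hstep_lt h2; omega
      obtain ⟨b, rfl⟩ := Nat.exists_eq_succ_of_ne_zero hq'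
      have hstepw : hstep M w m b := hstep_cons_succ.mp h2
      refine ⟨d, hd, hM, Or.inr ⟨b, rfl, ?_⟩⟩
      rcases hOr with h1' | ⟨b', hb', hrb'⟩
      · have : d = m := by omega
        subst this
        exact Relation.TransGen.single hstepw
      · have : b' = m := by omega
        subst this
        exact Relation.TransGen.tail hrb' hstepw

theorem HIdeal_cons {x : B} {w : List B} {S : Set ℕ} (h : HIdeal M (x :: w) S) :
    HIdeal M w (shf S) := by
  intro a b hab hb
  exact h (a+1) (b+1) (hrel_cons_of_hrel hab) hb

theorem hstep_take {w : List B} {m p q : ℕ} (h : hstep M (w.take m) p q) : hstep M w p q := by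
  obtain ⟨hp, hq, hpq, hM⟩ := h
  have hp' : p < w.length := lt_of_lt_of_le hp (by simpa using List.length_take_le m w)
  have hq' : q < w.length := lt_of_lt_of_le hq (by simpa using List.length_take_le m w)
  refine ⟨hp', hq', hpq, ?_⟩
  rwa [List.getElem_take, List.getElem_take] at hM

theorem hrel_take {w : List B} {m a b : ℕ} (h : hrel M (w.take m) a b) : hrel M w a b := by
  induction h with
  | single hs => exact Relation.TransGen.single (hstep_take hs)
  | tail _ hs ih => exact Relation.TransGen.tail ih (hstep_take hs)

theorem HIdeal_take {w : List B} {S : Set ℕ} (h : HIdeal M w S) (m : ℕ) :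
    HIdeal M (w.take m) S := fun a b hab hb => h a b (hrel_take hab) hb

theorem key_comm {x : B} {w : List B} {S : Set ℕ} (hS : HIdeal M (x :: w) S)
    (h0 : 0 ∉ S) {k : ℕ} (hk : k < w.length) (hks : k + 1 ∈ S) : M x (w[k]) = 2 := by
  by_contra hM
  exact h0 (hS 0 (k+1) (Relation.TransGen.single
    ⟨by simp, by simpa using Nat.succ_lt_succ hk, by omega, by simpa using hM⟩) hks)

theorem key_comm_subw {x : B} {w : List B} {S S' : Set ℕ} (hS : HIdeal M (x :: w) S)
    (h0 : 0 ∉ S) (hsub : S' ⊆ shf S) : ∀ y ∈ subw S' 0 w, M x y = 2 := by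
  intro y hy
  obtain ⟨k, hk, hkS, rfl⟩ := mem_subw hy
  simp only [Nat.zero_add] at hkS
  exact key_comm hS h0 hk (hsub hkS)

theorem shf_diff (S T : Set ℕ) : shf (T \ S) = shf T \ shf S := rfl

theorem shf_mono {S T : Set ℕ} (h : S ⊆ T) : shf S ⊆ shf T := fun _ hb => h hb

theorem sub_split (cs : CoxeterSystem M W) : ∀ (w : List B) (S T : Set ℕ),
    HIdeal M w S → HIdeal M w T → S ⊆ T →
    cs.wordProd (subw T 0 w) =
      cs.wordProd (subw S 0 w) * cs.wordProd (subw (T \ S) 0 w) := by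
  intro w
  induction w with
  | nil => intro S T _ _ _; simp
  | cons x w ih =>
      intro S T hS hT hST
      have ihw := ih (shf S) (shf T) (HIdeal_cons hS) (HIdeal_cons hT) (shf_mono hST)
      by_cases h0T : 0 ∈ T
      · by_cases h0S : 0 ∈ S
        · rw [subw_cons_mem h0T, subw_cons_mem h0S,
            subw_cons_not_mem (show 0 ∉ T \ S from fun hc => hc.2 h0S)]
          rw [cs.wordProd_cons, cs.wordProd_cons, subw_shift, subw_shift, subw_shift,
            shf_diff, ihw, mul_assoc]
        · have hcomm : cs.simple x * cs.wordProd (subw (shf S) 0 w) =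
              cs.wordProd (subw (shf S) 0 w) * cs.simple x :=
            wordProd_comm cs (key_comm_subw hS h0S (subset_refl _))
          rw [subw_cons_mem h0T, subw_cons_not_mem h0S,
            subw_cons_mem (show 0 ∈ T \ S from ⟨h0T, h0S⟩)]
          rw [cs.wordProd_cons, cs.wordProd_cons, subw_shift, subw_shift, subw_shift,
            shf_diff, ihw, ← mul_assoc, hcomm, mul_assoc]
      · have h0S : 0 ∉ S := fun hc => h0T (hST hc)
        rw [subw_cons_not_mem h0T, subw_cons_not_mem h0S,
          subw_cons_not_mem (show 0 ∉ T \ S from fun hc => h0T hc.1)]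
        rw [subw_shift, subw_shift, subw_shift, shf_diff]
        exact ihw

theorem full_split (cs : CoxeterSystem M W) (w : List B) (S : Set ℕ) (hS : HIdeal M w S) :
    cs.wordProd w = cs.wordProd (subw S 0 w) * cs.wordProd (subw Sᶜ 0 w) := by
  have huniv : HIdeal M w Set.univ := fun _ _ _ _ => Set.mem_univ _
  have := sub_split cs w S Set.univ hS huniv (Set.subset_univ S)
  rw [subw_univ] at this
  rwa [Set.compl_eq_univ_diff]

theorem length_subw_compl {S : Set ℕ} (w : List B) :
    (subw S 0 w).length + (subw Sᶜ 0 w).length = w.length := by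
  have := length_subw_add (S := S) (T := Sᶜ) w 0 (fun k _ => by simp)
  rw [Set.union_compl_self, subw_univ] at this
  omega

theorem len_subw (cs : CoxeterSystem M W) {w : List B} (hw : cs.IsReduced w) {S : Set ℕ}
    (hS : HIdeal M w S) : cs.IsReduced (subw S 0 w) := by
  have hsplit := full_split cs w S hS
  have h1 : cs.length (cs.wordProd (subw S 0 w)) ≤ (subw S 0 w).length :=
    cs.length_wordProd_le _
  have h2 : cs.length (cs.wordProd (subw Sᶜ 0 w)) ≤ (subw Sᶜ 0 w).length :=
    cs.length_wordProd_le _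
  have h3 : w.length ≤ cs.length (cs.wordProd (subw S 0 w)) +
      cs.length (cs.wordProd (subw Sᶜ 0 w)) := by
    calc w.length = cs.length (cs.wordProd w) := hw.symm
      _ ≤ _ := by rw [hsplit]; exact cs.length_mul_le _ _
  have h4 := length_subw_compl (S := S) w
  unfold CoxeterSystem.IsReduced
  omega
/-- The reflection associated with position `a` of the word `w`. -/
def Tt (cs : CoxeterSystem M W) (w : List B) (a : ℕ) : W :=
  cs.wordProd (w.take (a+1)) * (cs.wordProd (w.take a))⁻¹

theorem Tt_zero_cons (cs : CoxeterSystem M W) (x : B) (w : List B) :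
    Tt cs (x :: w) 0 = cs.simple x := by
  simp [Tt, cs.wordProd_cons]

theorem Tt_succ_cons (cs : CoxeterSystem M W) (x : B) (w : List B) (a : ℕ) :
    Tt cs (x :: w) (a+1) = cs.simple x * Tt cs w a * cs.simple x := by
  show cs.wordProd ((x :: w).take (a+1+1)) * (cs.wordProd ((x :: w).take (a+1)))⁻¹ = _
  rw [List.take_succ_cons, List.take_succ_cons, cs.wordProd_cons, cs.wordProd_cons,
    mul_inv_rev, cs.inv_simple]
  unfold Tt
  group

theorem Tt_eq (cs : CoxeterSystem M W) {w : List B} {a : ℕ} (ha : a < w.length) :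
    Tt cs w a = cs.wordProd (w.take a) * cs.simple (w[a]) * (cs.wordProd (w.take a))⁻¹ := by
  unfold Tt
  rw [List.take_succ, List.getElem?_eq_getElem ha]
  rw [cs.wordProd_append]
  simp

theorem Tt_isReflection (cs : CoxeterSystem M W) {w : List B} {a : ℕ} (ha : a < w.length) :
    cs.IsReflection (Tt cs w a) :=
  ⟨cs.wordProd (w.take a), w[a], Tt_eq cs ha⟩

theorem Tt_getD_lis (cs : CoxeterSystem M W) {w : List B} {a : ℕ} (ha : a < w.length) :
    Tt cs w a = (cs.leftInvSeq w).getD a 1 := by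
  rw [cs.getD_leftInvSeq, Tt_eq cs ha]
  rw [List.getElem?_eq_getElem ha]
  simp

/-- `Tt` only depends on the relevant prefix. -/
theorem Tt_take (cs : CoxeterSystem M W) (w : List B) {a m : ℕ} (h : a + 1 ≤ m) :
    Tt cs (w.take m) a = Tt cs w a := by
  unfold Tt
  rw [List.take_take, List.take_take, min_eq_left h, min_eq_left (by omega)]

/-- (TF) : on an ideal, `Tt` can be computed inside the subword. -/
theorem Tt_subw (cs : CoxeterSystem M W) : ∀ (w : List B) (S : Set ℕ) (a : ℕ),
    HIdeal M w S → a ∈ S → ∀ (ha : a < w.length),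
    Tt cs w a = cs.wordProd (subw S 0 (w.take a)) * cs.simple (w[a]) *
      (cs.wordProd (subw S 0 (w.take a)))⁻¹ := by
  intro w
  induction w with
  | nil => intro S a _ _ ha; simp at ha
  | cons x w ih =>
      intro S a hS haS ha
      match a with
      | 0 => simp [Tt_zero_cons]
      | a + 1 =>
          have ha' : a < w.length := by simpa using Nat.lt_of_succ_lt_succ ha
          have hgetl : (x :: w)[a+1] = w[a] := by simp
          rw [List.take_succ_cons]
          by_cases h0 : 0 ∈ S
          · rw [subw_cons_mem h0, subw_shift, cs.wordProd_cons]
            have ihw := ih (shf S) a (HIdeal_cons hS) haS ha'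
            rw [Tt_succ_cons, ihw, hgetl]
            rw [mul_inv_rev, cs.inv_simple]
            group
          · have hcomm1 : ∀ y ∈ subw (shf S) 0 (w.take a), M x y = 2 := by
              have hSt : HIdeal M (x :: w.take a) S := by
                have := HIdeal_take hS (a+1)
                rwa [List.take_succ_cons] at this
              exact key_comm_subw hSt h0 (subset_refl _)
            have hcomm2 : M x (w[a]) = 2 := key_comm hS h0 ha' haS
            have ihw := ih (shf S) a (HIdeal_cons hS) haS ha'
            rw [subw_cons_not_mem h0, subw_shift, Tt_succ_cons, ihw, hgetl]
            have e1 : cs.simple x * cs.wordProd (subw (shf S) 0 (w.take a)) =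
                cs.wordProd (subw (shf S) 0 (w.take a)) * cs.simple x :=
              wordProd_comm cs hcomm1
            have e2 : cs.simple x * cs.simple (w[a]) = cs.simple (w[a]) * cs.simple x :=
              simple_comm cs hcomm2
            set A := cs.wordProd (subw (shf S) 0 (w.take a))
            set u := cs.simple (w[a])
            set v := cs.simple x
            have hv : v * v = 1 := cs.simple_mul_simple_self x
            calc v * (A * u * A⁻¹) * v
                = (v * A) * u * (A⁻¹ * v) := by group
              _ = (A * v) * u * (A⁻¹ * v) := by rw [e1]
              _ = A * (v * u) * (A⁻¹ * v) := by group
              _ = A * (u * v) * (A⁻¹ * v) := by rw [e2]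
              _ = A * u * (v * A⁻¹) * v := by group
              _ = A * u * (A⁻¹ * v) * v := by
                  have : v * A⁻¹ = A⁻¹ * v := by
                    have := e1
                    calc v * A⁻¹ = A⁻¹ * (A * v) * A⁻¹ := by group
                      _ = A⁻¹ * (v * A) * A⁻¹ := by rw [e1]
                      _ = A⁻¹ * v := by group
                  rw [this]
              _ = A * u * A⁻¹ * (v * v) := by group
              _ = A * u * A⁻¹ := by rw [hv, mul_one]

/-- (K1') multiplying by an inversion from the ideal removes the letter. -/
theorem Tt_mul_subw (cs : CoxeterSystem M W) : ∀ (w : List B) (S : Set ℕ) (a : ℕ),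
    HIdeal M w S → a ∈ S → a < w.length →
    Tt cs w a * cs.wordProd (subw S 0 w) = cs.wordProd (subw (S \ {a}) 0 w) := by
  intro w
  induction w with
  | nil => intro S a _ _ ha; simp at ha
  | cons x w ih =>
      intro S a hS haS ha
      match a with
      | 0 =>
          rw [Tt_zero_cons, subw_cons_mem haS, subw_cons_not_mem
            (show (0:ℕ) ∉ S \ {0} from fun hc => hc.2 rfl)]
          rw [subw_shift, subw_shift, cs.wordProd_cons, ← mul_assoc,
            cs.simple_mul_simple_self, one_mul]
          congr 1
          apply subw_congr
          intro k _
          simp [shf]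
      | a + 1 =>
          have ha' : a < w.length := by simpa using Nat.lt_of_succ_lt_succ ha
          have hshf : shf (S \ {a+1}) = shf S \ {a} := by
            ext b; simp [shf]
          by_cases h0 : 0 ∈ S
          · have h0' : (0:ℕ) ∈ S \ {a+1} := ⟨h0, by simp⟩
            rw [Tt_succ_cons, subw_cons_mem h0, subw_cons_mem h0', subw_shift, subw_shift,
              cs.wordProd_cons, cs.wordProd_cons, hshf]
            have ihw := ih (shf S) a (HIdeal_cons hS) haS ha'
            set T := Tt cs w a
            set A := cs.wordProd (subw (shf S) 0 w)
            set v := cs.simple x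
            have hv : v * v = 1 := cs.simple_mul_simple_self x
            calc v * T * v * (v * A) = v * (T * ((v * v) * A)) := by group
              _ = v * (T * A) := by rw [hv, one_mul]
              _ = v * cs.wordProd (subw (shf S \ {a}) 0 w) := by rw [ihw]
          · have h0' : (0:ℕ) ∉ S \ {a+1} := fun hc => h0 hc.1
            rw [Tt_succ_cons, subw_cons_not_mem h0, subw_cons_not_mem h0', subw_shift,
              subw_shift, hshf]
            have ihw := ih (shf S) a (HIdeal_cons hS) haS ha'
            have e1 : cs.simple x * cs.wordProd (subw (shf S) 0 w) =
                cs.wordProd (subw (shf S) 0 w) * cs.simple x :=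
              wordProd_comm cs (key_comm_subw hS h0 (subset_refl _))
            have e2 : cs.simple x * cs.wordProd (subw (shf S \ {a}) 0 w) =
                cs.wordProd (subw (shf S \ {a}) 0 w) * cs.simple x :=
              wordProd_comm cs (key_comm_subw hS h0 Set.diff_subset)
            set A := cs.wordProd (subw (shf S) 0 w)
            set D := cs.wordProd (subw (shf S \ {a}) 0 w)
            set v := cs.simple x
            have hv : v * v = 1 := cs.simple_mul_simple_self x
            calc v * Tt cs w a * v * A
                = v * Tt cs w a * (v * A) := by group
              _ = v * Tt cs w a * (A * v) := by rw [e1]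
              _ = v * (Tt cs w a * A) * v := by group
              _ = v * D * v := by rw [ihw]
              _ = D * (v * v) := by rw [← mul_assoc, e2]
              _ = D := by rw [hv, mul_one]

theorem leftInvSeq_cons' (cs : CoxeterSystem M W) (i : B) (ω : List B) :
    cs.leftInvSeq (i :: ω) =
      cs.simple i :: (cs.leftInvSeq ω).map (fun t => cs.simple i * t * cs.simple i) := by
  show CoxeterSystem.leftInvSeq cs (i :: ω) = _
  rw [CoxeterSystem.leftInvSeq]
  congr 1
  apply List.map_congr_left
  intro t _
  simp [MulAut.conj]

/-- every left inversion of an ideal subword is one of the `Tt`. -/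
theorem mem_lis_subw (cs : CoxeterSystem M W) : ∀ (w : List B) (S : Set ℕ),
    HIdeal M w S → ∀ t ∈ cs.leftInvSeq (subw S 0 w),
    ∃ a, a ∈ S ∧ ∃ (ha : a < w.length), t = Tt cs w a := by
  intro w
  induction w with
  | nil => intro S _ t ht; simp at ht
  | cons x w ih =>
      intro S hS t ht
      by_cases h0 : 0 ∈ S
      · rw [subw_cons_mem h0, subw_shift, leftInvSeq_cons' cs] at ht
        rcases List.mem_cons.mp ht with h | h
        · exact ⟨0, h0, by simp, by simpa [Tt_zero_cons] using h⟩
        · obtain ⟨t', ht', rfl⟩ := List.mem_map.mp h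
          obtain ⟨a, haS, ha, rfl⟩ := ih (shf S) (HIdeal_cons hS) t' ht'
          exact ⟨a+1, haS, by simpa using Nat.succ_lt_succ ha,
            (Tt_succ_cons cs x w a).symm⟩
      · rw [subw_cons_not_mem h0, subw_shift] at ht
        obtain ⟨a, haS, ha, rfl⟩ := ih (shf S) (HIdeal_cons hS) t ht
        refine ⟨a+1, haS, by simpa using Nat.succ_lt_succ ha, ?_⟩
        rw [Tt_succ_cons]
        -- x commutes with Tt cs w a
        have hTF := Tt_subw cs w (shf S) a (HIdeal_cons hS) haS ha
        have hcomm1 : ∀ y ∈ subw (shf S) 0 (w.take a), M x y = 2 := by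
          have hSt : HIdeal M (x :: w.take a) S := by
            have := HIdeal_take hS (a+1)
            rwa [List.take_succ_cons] at this
          exact key_comm_subw hSt h0 (subset_refl _)
        have hcomm2 : M x (w[a]) = 2 := key_comm hS h0 ha haS
        have e1 : cs.simple x * cs.wordProd (subw (shf S) 0 (w.take a)) =
            cs.wordProd (subw (shf S) 0 (w.take a)) * cs.simple x :=
          wordProd_comm cs hcomm1
        have e2 : cs.simple x * cs.simple (w[a]) = cs.simple (w[a]) * cs.simple x :=
          simple_comm cs hcomm2
        rw [hTF]
        set A := cs.wordProd (subw (shf S) 0 (w.take a))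
        set u := cs.simple (w[a])
        set v := cs.simple x
        have hv : v * v = 1 := cs.simple_mul_simple_self x
        have hAv : v * A⁻¹ = A⁻¹ * v := by
          calc v * A⁻¹ = A⁻¹ * (A * v) * A⁻¹ := by group
            _ = A⁻¹ * (v * A) * A⁻¹ := by rw [e1]
            _ = A⁻¹ * v := by group
        calc A * u * A⁻¹
            = (v * v) * A * u * A⁻¹ * (v * v) := by rw [hv]; group
          _ = v * (v * A) * u * (A⁻¹ * v) * v := by group
          _ = v * (A * v) * u * (A⁻¹ * v) * v := by rw [e1]
          _ = v * A * (v * u) * (A⁻¹ * v) * v := by group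
          _ = v * A * (u * v) * (A⁻¹ * v) * v := by rw [e2]
          _ = v * A * u * (v * A⁻¹) * (v * v) := by group
          _ = v * A * u * (v * A⁻¹) * 1 := by rw [hv]
          _ = v * A * u * (A⁻¹ * v) * 1 := by rw [hAv]
          _ = v * (A * u * A⁻¹) * v := by group

theorem take_eraseIdx_of_le {α : Type*} {l : List α} {k b : ℕ} (h : k ≤ b)
    (hbl : b ≤ l.length) : (l.eraseIdx b).take k = l.take k := by
  rw [List.eraseIdx_eq_take_drop_succ]
  have h1 : (l.take b).length = b := by simp [hbl]
  have h2 : l.take k = (l.take b).take k := by rw [List.take_take, min_eq_left h]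
  rw [h2]
  generalize l.take b = lb at h1 ⊢
  generalize l.drop (b+1) = ld
  subst h1
  rw [List.take_append]
  simp [Nat.sub_eq_zero_of_le h]

theorem Tt_invol (cs : CoxeterSystem M W) {w : List B} {a : ℕ} (ha : a < w.length) :
    Tt cs w a * Tt cs w a = 1 :=
  (Tt_isReflection cs ha).mul_self

theorem Tt_inj (cs : CoxeterSystem M W) {w : List B} (hw : cs.IsReduced w) {a b : ℕ}
    (ha : a < w.length) (hb : b < w.length) (h : Tt cs w a = Tt cs w b) : a = b := by
  by_contra hne
  wlog hab : a < b generalizing a b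
  · exact this hb ha h.symm (Ne.symm hne) (by omega)
  -- Tt b * π w = π (w.eraseIdx b)
  have e1 : Tt cs w b * cs.wordProd w = cs.wordProd (w.eraseIdx b) := by
    rw [Tt_getD_lis cs hb]; exact cs.getD_leftInvSeq_mul_wordProd w b
  have hlen1 : (w.eraseIdx b).length = w.length - 1 := List.length_eraseIdx_of_lt hb
  have ha1 : a < (w.eraseIdx b).length := by omega
  have e2 : Tt cs w a = Tt cs (w.eraseIdx b) a := by
    unfold Tt
    rw [take_eraseIdx_of_le (show a + 1 ≤ b by omega) (le_of_lt hb),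
      take_eraseIdx_of_le (le_of_lt hab) (le_of_lt hb)]
  have e3 : Tt cs (w.eraseIdx b) a * cs.wordProd (w.eraseIdx b) =
      cs.wordProd ((w.eraseIdx b).eraseIdx a) := by
    rw [Tt_getD_lis cs ha1]; exact cs.getD_leftInvSeq_mul_wordProd _ a
  have e4 : cs.wordProd w = cs.wordProd ((w.eraseIdx b).eraseIdx a) := by
    calc cs.wordProd w = Tt cs w a * (Tt cs w b * cs.wordProd w) := by
          rw [h, ← mul_assoc, Tt_invol cs hb, one_mul]
      _ = Tt cs (w.eraseIdx b) a * cs.wordProd (w.eraseIdx b) := by rw [e1, ← e2]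
      _ = _ := e3
  have hlen2 : ((w.eraseIdx b).eraseIdx a).length = w.length - 2 := by
    rw [List.length_eraseIdx_of_lt ha1, hlen1]
    omega
  have : w.length ≤ w.length - 2 := by
    calc w.length = cs.length (cs.wordProd w) := hw.symm
      _ = cs.length (cs.wordProd ((w.eraseIdx b).eraseIdx a)) := by rw [e4]
      _ ≤ ((w.eraseIdx b).eraseIdx a).length := cs.length_wordProd_le _
      _ = w.length - 2 := hlen2
  omega
theorem z2 (x : ZMod 2) : x + x = 0 := by revert x; decide

theorem conj_eq_iff {G : Type*} [Group G] (g u v : G) :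
    g * u * g⁻¹ = v ↔ u = g⁻¹ * v * g := by
  constructor
  · intro h; rw [← h]; group
  · intro h; rw [h]; group

/-- the sign-tracking permutation associated with a simple generator -/
noncomputable def sigmaP (cs : CoxeterSystem M W) (i : B) : Equiv.Perm (W × ZMod 2) :=
  Function.Involutive.toPerm
    (fun p => (cs.simple i * p.1 * cs.simple i,
      p.2 + if p.1 = cs.simple i then 1 else 0))
    (by
      rintro ⟨t, ε⟩
      have hv := cs.simple_mul_simple_self i
      have h1 : cs.simple i * (cs.simple i * t * cs.simple i) * cs.simple i = t := by
        calc cs.simple i * (cs.simple i * t * cs.simple i) * cs.simple i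
            = (cs.simple i * cs.simple i) * t * (cs.simple i * cs.simple i) := by group
          _ = t := by rw [hv]; group
      have h2 : (cs.simple i * t * cs.simple i = cs.simple i) ↔ (t = cs.simple i) := by
        constructor
        · intro h
          have := congrArg (fun z => cs.simple i * z * cs.simple i) h
          rwa [h1, show cs.simple i * cs.simple i * cs.simple i = cs.simple i by
            rw [hv, one_mul]] at this
        · intro h; rw [h, hv, one_mul]
      simp only [Prod.mk.injEq]
      constructor
      · exact h1
      · by_cases h : t = cs.simple i
        · rw [if_pos h, if_pos (h2.mpr h), add_assoc, z2, add_zero]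
        · rw [if_neg h, if_neg (fun hc => h (h2.mp hc)), add_zero, add_zero])

theorem sigmaP_apply (cs : CoxeterSystem M W) (i : B) (t : W) (ε : ZMod 2) :
    sigmaP cs i (t, ε) = (cs.simple i * t * cs.simple i,
      ε + if t = cs.simple i then 1 else 0) := rfl

theorem sigma_mul_apply (cs : CoxeterSystem M W) (i j : B) (t : W) (ε : ZMod 2) :
    (sigmaP cs i * sigmaP cs j) (t, ε) =
      ((cs.simple i * cs.simple j) * t * (cs.simple i * cs.simple j)⁻¹,
        ε + (if t = cs.simple j then 1 else 0)
          + (if t = cs.simple j * (cs.simple i * cs.simple j) then 1 else 0)) := by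
  rw [Equiv.Perm.mul_apply, sigmaP_apply, sigmaP_apply]
  have h2 : (cs.simple j * t * cs.simple j = cs.simple i) ↔
      (t = cs.simple j * (cs.simple i * cs.simple j)) := by
    rw [show cs.simple j * t * cs.simple j = cs.simple j * t * (cs.simple j)⁻¹ by
      rw [cs.inv_simple], conj_eq_iff]
    rw [cs.inv_simple]
    constructor
    · intro h; rw [h]; group
    · intro h; rw [h]; group
  simp only [Prod.mk.injEq]
  constructor
  · rw [mul_inv_rev, cs.inv_simple, cs.inv_simple]; group
  · rw [if_congr h2 rfl rfl]

theorem pow_inv_mul_simple (cs : CoxeterSystem M W) (i j : B) (m : ℕ) :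
    ((cs.simple i * cs.simple j) ^ m)⁻¹ * cs.simple j
      = cs.simple j * (cs.simple i * cs.simple j) ^ m := by
  induction m with
  | zero => simp
  | succ m ih =>
      have key : (cs.simple i * cs.simple j)⁻¹ * cs.simple j =
          cs.simple j * (cs.simple i * cs.simple j) := by
        rw [mul_inv_rev, cs.inv_simple, cs.inv_simple]
        group
      calc ((cs.simple i * cs.simple j) ^ (m+1))⁻¹ * cs.simple j
          = ((cs.simple i * cs.simple j) ^ m)⁻¹ *
            ((cs.simple i * cs.simple j)⁻¹ * cs.simple j) := by
            rw [pow_succ', mul_inv_rev, mul_assoc]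
        _ = ((cs.simple i * cs.simple j) ^ m)⁻¹ *
            (cs.simple j * (cs.simple i * cs.simple j)) := by rw [key]
        _ = (((cs.simple i * cs.simple j) ^ m)⁻¹ * cs.simple j) *
            (cs.simple i * cs.simple j) := by rw [mul_assoc]
        _ = cs.simple j * (cs.simple i * cs.simple j) ^ m *
            (cs.simple i * cs.simple j) := by rw [ih]
        _ = cs.simple j * (cs.simple i * cs.simple j) ^ (m+1) := by
            rw [pow_succ, mul_assoc]

theorem sum_range_add' {Mo : Type*} [AddCommMonoid Mo] (f : ℕ → Mo) (a b : ℕ) :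
    ∑ r ∈ Finset.range (a + b), f r =
      (∑ r ∈ Finset.range a, f r) + ∑ r ∈ Finset.range b, f (a + r) := by
  induction b with
  | zero => simp
  | succ b ih =>
      rw [show a + (b+1) = (a+b)+1 by omega, Finset.sum_range_succ, ih,
        Finset.sum_range_succ, add_assoc]

theorem sigma_pow_apply (cs : CoxeterSystem M W) (i j : B) (m : ℕ) (t : W) (ε : ZMod 2) :
    ((sigmaP cs i * sigmaP cs j) ^ m) (t, ε) =
      ((cs.simple i * cs.simple j)^m * t * ((cs.simple i * cs.simple j)^m)⁻¹,
        ε + ∑ r ∈ Finset.range (2*m),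
          (if t = cs.simple j * (cs.simple i * cs.simple j)^r then (1:ZMod 2) else 0)) := by
  induction m with
  | zero => simp
  | succ m ih =>
      set p := cs.simple i * cs.simple j with hp
      rw [pow_succ']
      rw [Equiv.Perm.mul_apply, ih, sigma_mul_apply]
      have e1 : p * (p^m * t * (p^m)⁻¹) * p⁻¹ = p^(m+1) * t * (p^(m+1))⁻¹ := by
        rw [pow_succ']
        group
      have c1 : (p^m * t * (p^m)⁻¹ = cs.simple j) ↔ (t = cs.simple j * p^(2*m)) := by
        rw [show p^m * t * (p^m)⁻¹ = cs.simple j ↔ t = (p^m)⁻¹ * cs.simple j * p^m from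
          conj_eq_iff _ _ _]
        rw [show (p^m)⁻¹ * cs.simple j * p^m = ((p^m)⁻¹ * cs.simple j) * p^m by group,
          pow_inv_mul_simple, show cs.simple j * p ^ m * p ^ m = cs.simple j * p^(2*m) by
            rw [show 2*m = m + m by omega, pow_add]; group]
      have c2 : (p^m * t * (p^m)⁻¹ = cs.simple j * p) ↔ (t = cs.simple j * p^(2*m+1)) := by
        rw [conj_eq_iff]
        rw [show (p^m)⁻¹ * (cs.simple j * p) * p^m = (((p^m)⁻¹ * cs.simple j) * p) * p^m by
          group, pow_inv_mul_simple]
        rw [show cs.simple j * p ^ m * p * p ^ m = cs.simple j * p^(2*m+1) by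
          rw [show 2*m+1 = m + (1 + m) by omega, pow_add, pow_add]; group]
      simp only [Prod.mk.injEq]
      constructor
      · exact e1
      · rw [if_congr c1 rfl rfl, if_congr c2 rfl rfl]
        rw [show 2*(m+1) = (2*m) + 1 + 1 by omega, Finset.sum_range_succ,
          Finset.sum_range_succ]
        rw [add_assoc, add_assoc, add_assoc]

theorem sigma_liftable (cs : CoxeterSystem M W) :
    ∀ i j : B, (sigmaP cs i * sigmaP cs j) ^ (M i j) = 1 := by
  intro i j
  apply Equiv.ext
  rintro ⟨t, ε⟩
  rw [sigma_pow_apply]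
  have hpm : (cs.simple i * cs.simple j) ^ (M i j) = 1 := cs.simple_mul_simple_pow i j
  have hsum : ∑ r ∈ Finset.range (2 * M i j),
      (if t = cs.simple j * (cs.simple i * cs.simple j)^r then (1:ZMod 2) else 0) = 0 := by
    rw [show 2 * M i j = M i j + M i j by omega, sum_range_add']
    have : ∀ r, (if t = cs.simple j * (cs.simple i * cs.simple j)^(M i j + r)
        then (1:ZMod 2) else 0) =
        (if t = cs.simple j * (cs.simple i * cs.simple j)^r then (1:ZMod 2) else 0) := by
      intro r
      rw [pow_add, hpm, one_mul]
    rw [Finset.sum_congr rfl (fun r _ => this r)]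
    exact z2 _
  rw [hpm, hsum]
  simp

/-- the sign-tracking representation of `W` -/
noncomputable def theta (cs : CoxeterSystem M W) : W →* Equiv.Perm (W × ZMod 2) :=
  cs.lift ⟨fun i => sigmaP cs i, sigma_liftable cs⟩

theorem theta_simple (cs : CoxeterSystem M W) (i : B) :
    theta cs (cs.simple i) = sigmaP cs i :=
  cs.lift_apply_simple (sigma_liftable cs) i

/-- ZMod-2 count of `t` in the right inversion sequence -/
noncomputable def ctp (cs : CoxeterSystem M W) (ω : List B) (t : W) : ZMod 2 :=
  ((cs.rightInvSeq ω).map (fun r => if r = t then (1:ZMod 2) else 0)).sum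

theorem ctp_nil (cs : CoxeterSystem M W) (t : W) : ctp cs [] t = 0 := rfl

theorem rightInvSeq_cons' (cs : CoxeterSystem M W) (i : B) (ω : List B) :
    cs.rightInvSeq (i :: ω) =
      ((cs.wordProd ω)⁻¹ * cs.simple i * cs.wordProd ω) :: cs.rightInvSeq ω := rfl

theorem ctp_cons (cs : CoxeterSystem M W) (i : B) (ω : List B) (t : W) :
    ctp cs (i :: ω) t =
      (if (cs.wordProd ω)⁻¹ * cs.simple i * cs.wordProd ω = t then 1 else 0) + ctp cs ω t := by
  unfold ctp
  rw [rightInvSeq_cons']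
  simp

theorem ctp_ne_zero_mem (cs : CoxeterSystem M W) (ω : List B) (t : W)
    (h : ctp cs ω t ≠ 0) : t ∈ cs.rightInvSeq ω := by
  by_contra hmem
  apply h
  unfold ctp
  apply List.sum_eq_zero
  intro x hx
  obtain ⟨r, hr, rfl⟩ := List.mem_map.mp hx
  rw [if_neg (fun hc => hmem (by rw [← hc]; exact hr))]

theorem theta_wordProd (cs : CoxeterSystem M W) : ∀ (ω : List B) (t : W) (ε : ZMod 2),
    theta cs (cs.wordProd ω) (t, ε) =
      (cs.wordProd ω * t * (cs.wordProd ω)⁻¹, ε + ctp cs ω t) := by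
  intro ω
  induction ω with
  | nil => intro t ε; simp [ctp_nil]
  | cons i ω ih =>
      intro t ε
      rw [cs.wordProd_cons, map_mul, theta_simple, Equiv.Perm.mul_apply, ih, sigmaP_apply]
      have hcond : (cs.wordProd ω * t * (cs.wordProd ω)⁻¹ = cs.simple i) ↔
          ((cs.wordProd ω)⁻¹ * cs.simple i * cs.wordProd ω = t) := by
        rw [conj_eq_iff]
        constructor
        · intro h; rw [h]
        · intro h; rw [← h]
      simp only [Prod.mk.injEq]
      constructor
      · rw [mul_inv_rev, cs.inv_simple]; group
      · rw [if_congr hcond rfl rfl, ctp_cons]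
        push_cast
        ring

theorem ctp_eq_of_prod_eq (cs : CoxeterSystem M W) {ω ω' : List B}
    (h : cs.wordProd ω = cs.wordProd ω') (t : W) : ctp cs ω t = ctp cs ω' t := by
  have h1 := theta_wordProd cs ω t 0
  have h2 := theta_wordProd cs ω' t 0
  rw [h] at h1
  rw [h1] at h2
  have := (Prod.mk.injEq _ _ _ _).mp h2
  simpa using this.2

theorem ctp_append (cs : CoxeterSystem M W) : ∀ (α β : List B) (t : W),
    ctp cs (α ++ β) t =
      ctp cs α (cs.wordProd β * t * (cs.wordProd β)⁻¹) + ctp cs β t := by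
  intro α
  induction α with
  | nil => intro β t; simp [ctp_nil]
  | cons i α ih =>
      intro β t
      rw [List.cons_append, ctp_cons, ctp_cons, ih, cs.wordProd_append]
      have hcond : ((cs.wordProd α * cs.wordProd β)⁻¹ * cs.simple i *
            (cs.wordProd α * cs.wordProd β) = t) ↔
          ((cs.wordProd α)⁻¹ * cs.simple i * cs.wordProd α =
            cs.wordProd β * t * (cs.wordProd β)⁻¹) := by
        constructor
        · intro h; rw [← h]; group
        · intro h
          rw [show (cs.wordProd α * cs.wordProd β)⁻¹ * cs.simple i *
            (cs.wordProd α * cs.wordProd β) = (cs.wordProd β)⁻¹ *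
            ((cs.wordProd α)⁻¹ * cs.simple i * cs.wordProd α) * cs.wordProd β by group, h]
          group
      rw [if_congr hcond rfl rfl]
      ring

theorem ctp_palindrome (cs : CoxeterSystem M W) : ∀ (ν : List B) (i : B),
    ctp cs (ν ++ i :: ν.reverse) (cs.wordProd ν * cs.simple i * (cs.wordProd ν)⁻¹) = 1 := by
  intro ν
  induction ν with
  | nil =>
      intro i
      simp only [List.nil_append, List.reverse_nil, cs.wordProd_nil]
      rw [show ([i] : List B) = i :: ([] : List B) from rfl, ctp_cons]
      simp [ctp_nil]
  | cons j ν ih =>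
      intro i
      set t' := cs.wordProd ν * cs.simple i * (cs.wordProd ν)⁻¹ with ht'
      have hrefl : cs.IsReflection t' := ⟨cs.wordProd ν, i, rfl⟩
      have ht'inv : t' * t' = 1 := hrefl.mul_self
      have hw : (j :: ν) ++ i :: (j :: ν).reverse =
          j :: ((ν ++ i :: ν.reverse) ++ [j]) := by simp
      have hprod : cs.wordProd (ν ++ i :: ν.reverse) = t' := by
        rw [cs.wordProd_append, cs.wordProd_cons, ht', cs.wordProd_reverse]
        group
      have htt : cs.wordProd (j :: ν) * cs.simple i * (cs.wordProd (j :: ν))⁻¹ =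
          cs.simple j * t' * cs.simple j := by
        rw [cs.wordProd_cons, ht', mul_inv_rev, cs.inv_simple]
        group
      rw [hw, htt, ctp_cons, ctp_append]
      have h1 : cs.wordProd ((ν ++ i :: ν.reverse) ++ [j]) = t' * cs.simple j := by
        rw [cs.wordProd_append, hprod, cs.wordProd_singleton]
      rw [h1]
      have hmid : ctp cs (ν ++ i :: ν.reverse)
          (cs.wordProd [j] * (cs.simple j * t' * cs.simple j) * (cs.wordProd [j])⁻¹) = 1 := by
        rw [cs.wordProd_singleton, cs.inv_simple]
        rw [show cs.simple j * (cs.simple j * t' * cs.simple j) * cs.simple j =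
          (cs.simple j * cs.simple j) * t' * (cs.simple j * cs.simple j) by group,
          cs.simple_mul_simple_self j, one_mul, mul_one]
        exact ih i
      have hlast : ctp cs [j] (cs.simple j * t' * cs.simple j) =
          if t' = cs.simple j then 1 else 0 := by
        rw [show ([j] : List B) = j :: ([] : List B) from rfl, ctp_cons, ctp_nil, add_zero,
          cs.wordProd_nil]
        have hiff : (1⁻¹ * cs.simple j * 1 = cs.simple j * t' * cs.simple j) ↔
            (t' = cs.simple j) := by
          rw [inv_one, one_mul, mul_one]
          constructor
          · intro h
            have h1 : cs.simple j * (t' * cs.simple j) = cs.simple j * 1 := by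
              rw [mul_one, ← mul_assoc, ← h]
            have h2 := mul_left_cancel h1
            have h3 : t' * cs.simple j = cs.simple j * cs.simple j := by
              rw [h2, cs.simple_mul_simple_self]
            exact mul_right_cancel h3
          · intro h
            rw [h, cs.simple_mul_simple_self, one_mul]
        rw [if_congr hiff rfl rfl]
      have hfirst : ((t' * cs.simple j)⁻¹ * cs.simple j * (t' * cs.simple j) =
          cs.simple j * t' * cs.simple j) ↔ (t' = cs.simple j) := by
        have hinv : t'⁻¹ = t' := hrefl.inv
        have e : (t' * cs.simple j)⁻¹ * cs.simple j * (t' * cs.simple j) =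
            (cs.simple j * t') * (cs.simple j * t') * cs.simple j := by
          rw [mul_inv_rev, cs.inv_simple, hinv]
          group
        constructor
        · intro h
          have h2 : (cs.simple j * t') * (cs.simple j * t') * cs.simple j =
              (cs.simple j * t') * cs.simple j :=
            calc (cs.simple j * t') * (cs.simple j * t') * cs.simple j
                = (t' * cs.simple j)⁻¹ * cs.simple j * (t' * cs.simple j) := e.symm
              _ = cs.simple j * t' * cs.simple j := h
              _ = (cs.simple j * t') * cs.simple j := by group
          have h3 := mul_right_cancel h2
          have h4 : (cs.simple j * t') * (cs.simple j * t') = (cs.simple j * t') * 1 := by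
            rw [h3, mul_one]
          have h5 := mul_left_cancel h4
          have h6 : t' * cs.simple j = cs.simple j * cs.simple j := by
            have := mul_left_cancel (show cs.simple j * (t' * cs.simple j) =
              cs.simple j * (cs.simple j * cs.simple j) by
                rw [← mul_assoc, h5, one_mul, cs.simple_mul_simple_self, mul_one])
            exact this
          have h7 := mul_right_cancel h6
          exact h7
        · intro h
          rw [e, h, cs.simple_mul_simple_self]
          rw [one_mul]
      rw [hmid, hlast, if_congr hfirst rfl rfl]
      by_cases h : t' = cs.simple j
      · simp only [if_pos h]
        decide
      · simp only [if_neg h]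
        decide

/-- Strong exchange, right-handed version. -/
theorem strong_exch_right (cs : CoxeterSystem M W) (ω : List B) (t : W)
    (hrefl : cs.IsReflection t)
    (hlt : cs.length (cs.wordProd ω * t) < cs.length (cs.wordProd ω)) :
    t ∈ cs.rightInvSeq ω := by
  obtain ⟨v, i, hvi⟩ := hrefl
  obtain ⟨ν, hν⟩ : ∃ ν : List B, cs.wordProd ν = v := cs.wordProd_surjective v
  obtain ⟨τ, hτred, hτ⟩ := cs.exists_reduced_word' (cs.wordProd ω * t)
  set θ : List B := ν ++ i :: ν.reverse with hθ
  have hθprod : cs.wordProd θ = t := by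
    rw [hθ, cs.wordProd_append, cs.wordProd_cons, cs.wordProd_reverse, hν, hvi]
    group
  have hreflt : cs.IsReflection t := ⟨v, i, hvi⟩
  have htinv : t * t = 1 := hreflt.mul_self
  have hω' : cs.wordProd (τ ++ θ) = cs.wordProd ω := by
    rw [cs.wordProd_append, hθprod, ← hτ]
    rw [mul_assoc, htinv, mul_one]
  have hind := ctp_eq_of_prod_eq cs hω'.symm t
  have hτctp : ctp cs τ (cs.wordProd θ * t * (cs.wordProd θ)⁻¹) = 0 := by
    rw [hθprod]
    rw [show t * t * t⁻¹ = t by rw [htinv, one_mul]; exact hreflt.inv]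
    by_contra hne
    have hmem := ctp_ne_zero_mem cs τ t hne
    have hinv := cs.isRightInversion_of_mem_rightInvSeq hτred hmem
    rw [← hτ] at hinv
    have : cs.length (cs.wordProd ω * t * t) < cs.length (cs.wordProd ω * t) := hinv.2
    rw [mul_assoc, htinv, mul_one] at this
    omega
  have hθctp : ctp cs θ t = 1 := by
    have := ctp_palindrome cs ν i
    rw [hν, ← hvi] at this
    exact this
  have : ctp cs ω t = 1 := by
    rw [hind, ctp_append, hτctp, hθctp, zero_add]
  apply ctp_ne_zero_mem
  rw [this]
  decide

/-- Strong exchange, left-handed version. -/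
theorem strong_exch_left (cs : CoxeterSystem M W) (ω : List B) (t : W)
    (hrefl : cs.IsReflection t)
    (hlt : cs.length (t * cs.wordProd ω) < cs.length (cs.wordProd ω)) :
    t ∈ cs.leftInvSeq ω := by
  have h1 : cs.length (cs.wordProd ω.reverse * t) < cs.length (cs.wordProd ω.reverse) := by
    rw [cs.wordProd_reverse, cs.length_inv]
    calc cs.length ((cs.wordProd ω)⁻¹ * t) = cs.length (((cs.wordProd ω)⁻¹ * t)⁻¹) :=
          (cs.length_inv _).symm
      _ = cs.length (t⁻¹ * cs.wordProd ω) := by rw [mul_inv_rev, inv_inv]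
      _ = cs.length (t * cs.wordProd ω) := by rw [hrefl.inv]
      _ < cs.length (cs.wordProd ω) := hlt
  have := strong_exch_right cs ω.reverse t hrefl h1
  rwa [cs.rightInvSeq_reverse, List.mem_reverse] at this
section SortingWord

variable (cs : CoxeterSystem M W) (cw : List B)

theorem sortAux_zero (rest : List B) (g : W) : sortAux cs cw 0 rest g = [] := rfl

theorem sortAux_nil (n : ℕ) (g : W) : sortAux cs cw (n+1) [] g = sortAux cs cw n cw g := rfl

theorem sortAux_cons (n : ℕ) (s : B) (rest : List B) (g : W) :
    sortAux cs cw (n+1) (s :: rest) g =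
      if cs.length (cs.simple s * g) < cs.length g then
        s :: sortAux cs cw n rest (cs.simple s * g)
      else sortAux cs cw n rest g := rfl

theorem sortAux_one : ∀ (n : ℕ) (rest : List B), sortAux cs cw n rest 1 = [] := by
  intro n
  induction n with
  | zero => intro rest; rfl
  | succ n ih =>
      intro rest
      cases rest with
      | nil => rw [sortAux_nil]; exact ih cw
      | cons s rest' =>
          rw [sortAux_cons, if_neg, ih]
          rw [cs.length_one]
          omega

theorem sortAux_spec (hcw : ∀ b : B, b ∈ cw) :
    ∀ (n : ℕ) (g : W) (rest : List B), rest <:+ cw →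
    ((∃ b ∈ rest, cs.IsLeftDescent g b) →
      (cs.length g - 1) * (cw.length + 1) + rest.length + 1 ≤ n) →
    ((¬∃ b ∈ rest, cs.IsLeftDescent g b) →
      cs.length g * (cw.length + 1) + rest.length + 1 ≤ n) →
    cs.wordProd (sortAux cs cw n rest g) = g ∧
      (sortAux cs cw n rest g).length = cs.length g := by
  intro n
  induction n with
  | zero =>
      intro g rest hsuf h1 h2
      exfalso
      by_cases hd : ∃ b ∈ rest, cs.IsLeftDescent g b
      · have := h1 hd; omega
      · have := h2 hd; omega
  | succ n ih =>
      intro g rest hsuf h1 h2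
      by_cases hg : g = 1
      · subst hg
        rw [sortAux_one]
        constructor
        · exact cs.wordProd_nil
        · rw [cs.length_one]; rfl
      · have hLgpos : 1 ≤ cs.length g := by
          rcases Nat.eq_zero_or_pos (cs.length g) with h | h
          · exact absurd (cs.length_eq_zero_iff.mp h) hg
          · exact h
        cases rest with
        | nil =>
            rw [sortAux_nil]
            obtain ⟨i, hi⟩ := cs.exists_leftDescent_of_ne_one hg
            have hdcw : ∃ b ∈ cw, cs.IsLeftDescent g b := ⟨i, hcw i, hi⟩
            have hfuel : cs.length g * (cw.length + 1) ≤ n := by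
              have := h2 (by simp)
              have hlen0 : ([] : List B).length = 0 := rfl
              omega
            have hmul : (cs.length g - 1) * (cw.length + 1) + (cw.length + 1) =
                cs.length g * (cw.length + 1) := by
              calc (cs.length g - 1) * (cw.length + 1) + (cw.length + 1)
                  = ((cs.length g - 1) + 1) * (cw.length + 1) := by ring
                _ = cs.length g * (cw.length + 1) := by
                    rw [show cs.length g - 1 + 1 = cs.length g by omega]
            exact ih g cw (List.suffix_refl cw) (fun _ => by omega)
              (fun hc => absurd hdcw hc)
        | cons s rest' =>
            have hsuf' : rest' <:+ cw := (List.suffix_cons s rest').trans hsuf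
            have hrestlen : rest'.length + 1 ≤ cw.length := by
              have := hsuf.length_le
              simp at this
              omega
            rw [sortAux_cons]
            by_cases hdes : cs.length (cs.simple s * g) < cs.length g
            · rw [if_pos hdes]
              have hsg : cs.length (cs.simple s * g) = cs.length g - 1 := by
                rcases cs.length_simple_mul g s with h | h <;> omega
              have hdesc : cs.IsLeftDescent g s := hdes
              have hfuel := h1 ⟨s, by simp, hdesc⟩
              simp only [List.length_cons] at hfuel
              have hmul2 : (cs.length (cs.simple s * g) - 1) * (cw.length + 1) ≤
                  (cs.length g - 1) * (cw.length + 1) :=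
                Nat.mul_le_mul_right _ (by omega)
              have hmul3 : cs.length (cs.simple s * g) * (cw.length + 1) =
                  (cs.length g - 1) * (cw.length + 1) := by rw [hsg]
              have hih := ih (cs.simple s * g) rest' hsuf'
                (fun _ => by omega) (fun _ => by omega)
              constructor
              · rw [cs.wordProd_cons, hih.1, cs.simple_mul_simple_cancel_left]
              · simp only [List.length_cons, hih.2]
                omega
            · rw [if_neg hdes]
              have hnots : ¬ cs.IsLeftDescent g s := hdes
              have hsplit : (∃ b ∈ s :: rest', cs.IsLeftDescent g b) ↔
                  (∃ b ∈ rest', cs.IsLeftDescent g b) := by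
                constructor
                · rintro ⟨b, hb, hdb⟩
                  rcases List.mem_cons.mp hb with rfl | hb'
                  · exact absurd hdb hnots
                  · exact ⟨b, hb', hdb⟩
                · rintro ⟨b, hb, hdb⟩
                  exact ⟨b, by simp [hb], hdb⟩
              apply ih g rest' hsuf'
              · intro hd
                have := h1 (hsplit.mpr hd)
                simp only [List.length_cons] at this
                omega
              · intro hd
                have := h2 (fun hc => hd (hsplit.mp hc))
                simp only [List.length_cons] at this
                omega

theorem sortingWord_spec (hcw : ∀ b : B, b ∈ cw) (w₀ : W) :
    cs.wordProd (sortingWord cs cw w₀) = w₀ ∧ cs.IsReduced (sortingWord cs cw w₀) := by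
  have hmul : (cs.length w₀ + 1) * (cw.length + 1) =
      cs.length w₀ * (cw.length + 1) + (cw.length + 1) := by ring
  have hmul2 : (cs.length w₀ - 1) * (cw.length + 1) ≤ cs.length w₀ * (cw.length + 1) :=
    Nat.mul_le_mul_right _ (by omega)
  have := sortAux_spec cs cw hcw ((cs.length w₀ + 1) * (cw.length + 1)) w₀ cw
    (List.suffix_refl cw) (fun _ => by omega) (fun _ => by omega)
  refine ⟨this.1, ?_⟩
  unfold CoxeterSystem.IsReduced
  rw [show sortingWord cs cw w₀ =
    sortAux cs cw ((cs.length w₀ + 1) * (cw.length + 1)) cw w₀ from rfl]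
  rw [this.1, this.2]

end SortingWord

section Comm

theorem commStep_symm {l₁ l₂ : List B} (h : CommStep M l₁ l₂) : CommStep M l₂ l₁ := by
  obtain ⟨u, v, i, j, hM, h1, h2⟩ := h
  exact ⟨u, v, j, i, (M.symmetric i j) ▸ hM, h2, h1⟩

theorem commEquiv_refl (l : List B) : CommEquiv M l l := Relation.ReflTransGen.refl

theorem commEquiv_trans {l₁ l₂ l₃ : List B} (h : CommEquiv M l₁ l₂)
    (h' : CommEquiv M l₂ l₃) : CommEquiv M l₁ l₃ := Relation.ReflTransGen.trans h h'

theorem commEquiv_symm {l₁ l₂ : List B} (h : CommEquiv M l₁ l₂) : CommEquiv M l₂ l₁ := by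
  induction h with
  | refl => exact commEquiv_refl _
  | tail _ hstep ih =>
      exact commEquiv_trans (Relation.ReflTransGen.single (commStep_symm hstep)) ih

theorem commStep_prod (cs : CoxeterSystem M W) {l₁ l₂ : List B} (h : CommStep M l₁ l₂) :
    cs.wordProd l₁ = cs.wordProd l₂ := by
  obtain ⟨u, v, i, j, hM, rfl, rfl⟩ := h
  rw [cs.wordProd_append, cs.wordProd_append]
  congr 1
  rw [cs.wordProd_cons, cs.wordProd_cons, cs.wordProd_cons, cs.wordProd_cons,
    ← mul_assoc, ← mul_assoc, simple_comm cs hM]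

theorem commEquiv_prod (cs : CoxeterSystem M W) {l₁ l₂ : List B} (h : CommEquiv M l₁ l₂) :
    cs.wordProd l₁ = cs.wordProd l₂ := by
  induction h with
  | refl => rfl
  | tail _ hstep ih => exact ih.trans (commStep_prod cs hstep)

theorem commStep_cons {x : B} {l₁ l₂ : List B} (h : CommStep M l₁ l₂) :
    CommStep M (x :: l₁) (x :: l₂) := by
  obtain ⟨u, v, i, j, hM, rfl, rfl⟩ := h
  exact ⟨x :: u, v, i, j, hM, rfl, rfl⟩

theorem commEquiv_cons {x : B} {l₁ l₂ : List B} (h : CommEquiv M l₁ l₂) :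
    CommEquiv M (x :: l₁) (x :: l₂) := by
  induction h with
  | refl => exact commEquiv_refl _
  | tail _ hstep ih => exact Relation.ReflTransGen.tail ih (commStep_cons hstep)

theorem commStep_perm {l₁ l₂ : List B} (h : CommStep M l₁ l₂) : l₁.Perm l₂ := by
  obtain ⟨u, v, i, j, hM, rfl, rfl⟩ := h
  exact List.Perm.append_left u (List.Perm.swap j i v)

theorem commEquiv_perm {l₁ l₂ : List B} (h : CommEquiv M l₁ l₂) : l₁.Perm l₂ := by
  induction h with
  | refl => exact List.Perm.refl _
  | tail _ hstep ih => exact ih.trans (commStep_perm hstep)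

theorem move_front {x : B} {q : List B} : ∀ {p : List B}, (∀ y ∈ p, M y x = 2) →
    CommEquiv M (p ++ x :: q) (x :: (p ++ q)) := by
  intro p
  induction p with
  | nil => intro _; exact commEquiv_refl _
  | cons y p' ih =>
      intro h
      have h1 : CommEquiv M (y :: (p' ++ x :: q)) (y :: (x :: (p' ++ q))) :=
        commEquiv_cons (ih (fun z hz => h z (by simp [hz])))
      have h2 : CommStep M (y :: x :: (p' ++ q)) (x :: y :: (p' ++ q)) :=
        ⟨[], p' ++ q, y, x, h y (by simp), rfl, rfl⟩
      exact Relation.ReflTransGen.tail h1 h2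

/-- an ideal subword is a prefix of the word up to commutations -/
theorem sub_prefix (hM : ∀ i j : B, M i j = M j i) : ∀ (w : List B) (S : Set ℕ),
    HIdeal M w S → ∃ v, CommEquiv M w v ∧ (subw S 0 w) <+: v := by
  intro w
  induction w with
  | nil => intro S _; exact ⟨[], commEquiv_refl _, by simp⟩
  | cons x w ih =>
      intro S hS
      obtain ⟨v, hv, hpre⟩ := ih (shf S) (HIdeal_cons hS)
      by_cases h0 : 0 ∈ S
      · refine ⟨x :: v, commEquiv_cons hv, ?_⟩
        rw [subw_cons_mem h0, subw_shift]
        obtain ⟨t, ht⟩ := hpre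
        exact ⟨t, by rw [List.cons_append, ht]⟩
      · obtain ⟨t, ht⟩ := hpre
        have hsub : subw S 0 (x :: w) = subw (shf S) 0 w := by
          rw [subw_cons_not_mem h0, subw_shift]
        refine ⟨subw (shf S) 0 w ++ x :: t, ?_, by
          rw [hsub]; exact List.prefix_append _ _⟩
        have hcomm : ∀ y ∈ subw (shf S) 0 w, M y x = 2 := by
          intro y hy
          rw [hM y x]
          exact key_comm_subw hS h0 (subset_refl _) y hy
        have h1 : CommEquiv M (subw (shf S) 0 w ++ x :: t) (x :: (subw (shf S) 0 w ++ t)) :=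
          move_front hcomm
        have h2 : CommEquiv M (x :: w) (x :: (subw (shf S) 0 w ++ t)) := by
          apply commEquiv_cons
          rw [ht]
          exact hv
        exact commEquiv_trans h2 (commEquiv_symm h1)

end Comm

section Transport

/-- swap of positions 0 and 1 -/
def sw01 : ℕ → ℕ
  | 0 => 1
  | 1 => 0
  | (n+2) => n+2

theorem hstep_swap {i j : B} (hM : M i j = 2) {vv : List B} {p q : ℕ}
    (h : hstep M (i :: j :: vv) p q) : hstep M (j :: i :: vv) (sw01 p) (sw01 q) := by
  obtain ⟨hp, hq, hpq, hMpq⟩ := h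
  match p, q with
  | 0, 0 => omega
  | 0, 1 =>
      exfalso
      apply hMpq
      simpa using hM
  | 0, (q+2) =>
      show hstep M (j :: i :: vv) 1 (q+2)
      refine ⟨by simp, by simpa using hq, by omega, ?_⟩
      simpa using hMpq
  | 1, (q+2) =>
      show hstep M (j :: i :: vv) 0 (q+2)
      refine ⟨by simp, by simpa using hq, by omega, ?_⟩
      simpa using hMpq
  | (p+2), (q+2) =>
      show hstep M (j :: i :: vv) (p+2) (q+2)
      refine ⟨by simpa using hp, by simpa using hq, by omega, ?_⟩
      simpa using hMpq
  | 1, 0 => omega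
  | 1, 1 => omega
  | (p+2), 0 => omega
  | (p+2), 1 => omega

theorem hrel_swap {i j : B} (hM : M i j = 2) {vv : List B} {p q : ℕ}
    (h : hrel M (i :: j :: vv) p q) : hrel M (j :: i :: vv) (sw01 p) (sw01 q) := by
  induction h with
  | single h => exact Relation.TransGen.single (hstep_swap hM h)
  | tail _ h ih => exact Relation.TransGen.tail ih (hstep_swap hM h)

theorem transport_base {i j : B} (hM : M i j = 2) (vv : List B) (S₂ : Set ℕ)
    (hS₂ : HIdeal M (j :: i :: vv) S₂) :
    ∃ S, HIdeal M (i :: j :: vv) S ∧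
      CommEquiv M (subw S 0 (i :: j :: vv)) (subw S₂ 0 (j :: i :: vv)) := by
  have hMji : M j i = 2 := (M.symmetric i j) ▸ hM
  refine ⟨{n | sw01 n ∈ S₂}, ?_, ?_⟩
  · intro p q hpq hq
    exact hS₂ (sw01 p) (sw01 q) (hrel_swap hM hpq) hq
  · have m0 : (0 ∈ {n | sw01 n ∈ S₂}) ↔ 1 ∈ S₂ := Iff.rfl
    have m1 : (1 ∈ {n | sw01 n ∈ S₂}) ↔ 0 ∈ S₂ := Iff.rfl
    have htail : subw {n | sw01 n ∈ S₂} 2 vv = subw S₂ 2 vv := by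
      apply subw_congr
      intro k _
      show sw01 (2 + k) ∈ S₂ ↔ (2 + k) ∈ S₂
      rw [show 2 + k = k + 2 by omega]
      exact Iff.rfl
    by_cases h0 : 0 ∈ S₂ <;> by_cases h1 : 1 ∈ S₂
    · rw [subw_cons_mem (m0.mpr h1), subw_cons_mem (show (1:ℕ) ∈ {n | sw01 n ∈ S₂} from h0),
        subw_cons_mem h0, subw_cons_mem h1, htail]
      exact Relation.ReflTransGen.single ⟨[], subw S₂ 2 vv, i, j, hM, rfl, rfl⟩
    · rw [subw_cons_not_mem (fun hc => h1 (m0.mp hc)),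
        subw_cons_mem (show (1:ℕ) ∈ {n | sw01 n ∈ S₂} from h0),
        subw_cons_mem h0, subw_cons_not_mem h1, htail]
      exact commEquiv_refl _
    · rw [subw_cons_mem (m0.mpr h1),
        subw_cons_not_mem (show (1:ℕ) ∉ {n | sw01 n ∈ S₂} from h0),
        subw_cons_not_mem h0, subw_cons_mem h1, htail]
      exact commEquiv_refl _
    · rw [subw_cons_not_mem (fun hc => h1 (m0.mp hc)),
        subw_cons_not_mem (show (1:ℕ) ∉ {n | sw01 n ∈ S₂} from h0),
        subw_cons_not_mem h0, subw_cons_not_mem h1, htail]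
      exact commEquiv_refl _

theorem transport_cons {y : B} {a' b' : List B}
    (ih : ∀ S₂', HIdeal M b' S₂' →
      ∃ S', HIdeal M a' S' ∧ CommEquiv M (subw S' 0 a') (subw S₂' 0 b'))
    (S₂ : Set ℕ) (hS₂ : HIdeal M (y :: b') S₂) :
    ∃ S, HIdeal M (y :: a') S ∧
      CommEquiv M (subw S 0 (y :: a')) (subw S₂ 0 (y :: b')) := by
  obtain ⟨S', hS', hEq⟩ := ih (shf S₂) (HIdeal_cons hS₂)
  set S : Set ℕ := {n | (n = 0 ∧ 0 ∈ S₂) ∨ ∃ m, m ∈ S' ∧ n = m + 1} with hSdef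
  have hshfS : shf S = S' := by
    ext b
    show ((b + 1 = 0 ∧ 0 ∈ S₂) ∨ ∃ m, m ∈ S' ∧ b + 1 = m + 1) ↔ b ∈ S'
    constructor
    · rintro (⟨h, _⟩ | ⟨m, hm, hbm⟩)
      · omega
      · have : b = m := by omega
        rwa [this]
    · intro hb
      exact Or.inr ⟨b, hb, rfl⟩
  have h0iff : (0 ∈ S) ↔ (0 ∈ S₂) := by
    show ((0 = 0 ∧ 0 ∈ S₂) ∨ ∃ m, m ∈ S' ∧ 0 = m + 1) ↔ 0 ∈ S₂
    constructor
    · rintro (⟨_, h⟩ | ⟨m, _, hm⟩)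
      · exact h
      · omega
    · intro h; exact Or.inl ⟨rfl, h⟩
  refine ⟨S, ?_, ?_⟩
  · intro p q hpq hq
    have hq0 : q ≠ 0 := by have := hrel_lt hpq; omega
    obtain ⟨m, hmS', rfl⟩ : ∃ m, m ∈ S' ∧ q = m + 1 := by
      rcases hq with ⟨h, _⟩ | h
      · exact absurd h hq0
      · exact h
    cases p with
    | zero =>
        -- show 0 ∈ S₂
        obtain ⟨c, hc, hMc, hOr⟩ := hrel_zero_cases hpq
        have hcS' : c ∈ S' := by
          rcases hOr with h | ⟨b2, hb2, hrelb⟩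
          · have : c = m := by omega
            rwa [this]
          · have hbm : b2 = m := by omega
            rw [hbm] at hrelb
            exact hS' c m hrelb hmS'
        have hmem1 : a'[c] ∈ subw S' 0 a' := subw_mem hc (by simpa using hcS')
        have hmem2 : a'[c] ∈ subw (shf S₂) 0 b' := ((commEquiv_perm hEq).mem_iff).mp hmem1
        obtain ⟨d, hd, hdS, hdval⟩ := mem_subw hmem2
        simp only [Nat.zero_add] at hdS
        by_contra h0n
        have h0S₂ : 0 ∉ S₂ := fun hc2 => h0n (h0iff.mpr hc2)
        have := key_comm hS₂ h0S₂ hd hdS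
        rw [← hdval] at this
        exact hMc this
    | succ p' =>
        have hrel' : hrel M a' p' m := hrel_cons_succ.mp hpq
        exact Or.inr ⟨p', hS' p' m hrel' hmS', rfl⟩
  · by_cases h0 : 0 ∈ S₂
    · rw [subw_cons_mem (h0iff.mpr h0), subw_cons_mem h0, subw_shift, subw_shift, hshfS]
      exact commEquiv_cons hEq
    · rw [subw_cons_not_mem (fun hc => h0 (h0iff.mp hc)), subw_cons_not_mem h0,
        subw_shift, subw_shift, hshfS]
      exact hEq

theorem transport_step {a b : List B} (h : CommStep M a b) :
    ∀ S₂, HIdeal M b S₂ →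
      ∃ S, HIdeal M a S ∧ CommEquiv M (subw S 0 a) (subw S₂ 0 b) := by
  obtain ⟨u, v, i, j, hM, rfl, rfl⟩ := h
  induction u with
  | nil =>
      intro S₂ hS₂
      exact transport_base hM v S₂ hS₂
  | cons y u' ih =>
      intro S₂ hS₂
      exact transport_cons ih S₂ hS₂

theorem transport {w v : List B} (h : CommEquiv M w v) :
    ∀ S₂, HIdeal M v S₂ →
      ∃ S, HIdeal M w S ∧ CommEquiv M (subw S 0 w) (subw S₂ 0 v) := by
  induction h with
  | refl => intro S₂ h; exact ⟨S₂, h, commEquiv_refl _⟩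
  | tail _ hstep ih =>
      intro S₂ hS₂
      obtain ⟨S', hS', hEq'⟩ := transport_step hstep S₂ hS₂
      obtain ⟨S, hS, hEq⟩ := ih S' hS'
      exact ⟨S, hS, commEquiv_trans hEq hEq'⟩

end Transport

section Translate

theorem subw_zero {S : Set ℕ} : ∀ (l : List B) (n : ℕ),
    (∀ k, k < l.length → (n + k) ∉ S) → subw S n l = [] := by
  intro l
  induction l with
  | nil => intro n _; rfl
  | cons x t ih =>
      intro n h
      rw [subw_cons_not_mem (by simpa using h 0 (by simp))]
      apply ih
      intro k hk
      have := h (k+1) (by simpa using Nat.succ_lt_succ hk)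
      rwa [show n + (k+1) = (n+1) + k by omega] at this

theorem subw_singleton_len {a : ℕ} : ∀ (l : List B) (n : ℕ), n ≤ a → a < n + l.length →
    (subw {a} n l).length = 1 := by
  intro l
  induction l with
  | nil => intro n h1 h2; simp at h2; omega
  | cons x t ih =>
      intro n h1 h2
      by_cases hn : n = a
      · rw [subw_cons_mem (show n ∈ ({a} : Set ℕ) from hn)]
        have : subw {a} (n+1) t = [] := by
          apply subw_zero
          intro k hk
          simp only [Set.mem_singleton_iff]
          omega
        rw [this]
        rfl
      · rw [subw_cons_not_mem (show n ∉ ({a} : Set ℕ) from hn), ih (n+1) (by omega)]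
        simp only [List.length_cons] at h2
        omega

/-- lift a set of `Fin` to a set of naturals -/
def liftSet {n : ℕ} (I : Set (Fin n)) : Set ℕ := {b | ∃ h : b < n, (⟨b, h⟩ : Fin n) ∈ I}

theorem npo_of_hrel {w : List B} : ∀ {p q : ℕ}, hrel M w p q →
    ∀ (hp : p < w.length) (hq : q < w.length), npo M w ⟨p, hp⟩ ⟨q, hq⟩ := by
  intro p q h
  induction h with
  | single h =>
      intro hp hq
      obtain ⟨_, _, hlt, hM⟩ := h
      exact Relation.TransGen.single ⟨hlt, by simpa [List.get_eq_getElem] using hM⟩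
  | tail hpc h ih =>
      intro hp hq
      obtain ⟨hc, _, hlt, hM⟩ := h
      exact Relation.TransGen.tail (ih hp hc) ⟨hlt, by simpa [List.get_eq_getElem] using hM⟩

theorem hrel_of_npo {w : List B} {a b : Fin w.length} (h : npo M w a b) :
    hrel M w a.val b.val := by
  have hmap : ∀ x y : Fin w.length,
      (x < y ∧ M (w.get x) (w.get y) ≠ 2) → hstep M w x.val y.val := by
    intro x y hxy
    exact ⟨x.isLt, y.isLt, hxy.1, by simpa [List.get_eq_getElem] using hxy.2⟩
  exact Relation.TransGen.lift' (f := Fin.val)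
    (fun x y hxy => Relation.TransGen.single (hmap x y hxy)) _ _ h

theorem isOrderIdeal_iff_HIdeal {w : List B} (I : Set (Fin w.length)) :
    IsOrderIdeal M w I ↔ HIdeal M w (liftSet I) := by
  constructor
  · intro hI p q hpq hq
    obtain ⟨hqn, hqI⟩ := hq
    have hpn : p < w.length := (hrel_bounds hpq).1
    exact ⟨hpn, hI ⟨p, hpn⟩ ⟨q, hqn⟩ (npo_of_hrel hpq hpn hqn) hqI⟩
  · intro hH a b hab hb
    have := hH a.val b.val (hrel_of_npo hab) ⟨b.isLt, by simpa using hb⟩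
    obtain ⟨h, haI⟩ := this
    simpa using haI

end Translate

end Aux

/-- The lattice of order ideals of the natural partial order on the letters of the
`c`-sorting word of the longest element `w₀` is isomorphic, as a poset, to the set of
`c`-singletons ordered by the weak order. -/
theorem orderIdeals_equiv_cSingletons {B W : Type*} [Group W]
    (M : CoxeterMatrix B) (cs : CoxeterSystem M W)
    (cw : List B) (hcw : IsCoxWord cw)
    (w₀ : W) (hw₀ : ∀ v : W, cs.length v ≤ cs.length w₀) :
    ∃ φ : {I : Set (Fin (sortingWord cs cw w₀).length) //
            IsOrderIdeal M (sortingWord cs cw w₀) I} ≃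
          {w : W // IsCSingleton cs cw w₀ w},
      ∀ I J, I.val ⊆ J.val ↔ WeakLe cs (φ I).val (φ J).val := by
  classical
  obtain ⟨hswprod, hswred⟩ := sortingWord_spec cs cw hcw.2 w₀
  set sw : List B := sortingWord cs cw w₀ with hswdef
  -- forward: inclusion of ideals gives weak order
  have hfwd : ∀ S T : Set ℕ, HIdeal M sw S → HIdeal M sw T → S ⊆ T →
      WeakLe cs (cs.wordProd (subw S 0 sw)) (cs.wordProd (subw T 0 sw)) := by
    intro S T hS hT hST
    have hsplit := sub_split cs sw S T hS hT hST
    have hlenS : cs.length (cs.wordProd (subw S 0 sw)) = (subw S 0 sw).length :=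
      len_subw cs hswred hS
    have hlenT : cs.length (cs.wordProd (subw T 0 sw)) = (subw T 0 sw).length :=
      len_subw cs hswred hT
    have hadd : (subw T 0 sw).length =
        (subw S 0 sw).length + (subw (T \ S) 0 sw).length := by
      have hdisj : ∀ k, k < sw.length → ¬((0 + k) ∈ S ∧ (0 + k) ∈ T \ S) :=
        fun k _ h => h.2.2 h.1
      have := length_subw_add (S := S) (T := T \ S) sw 0 hdisj
      rwa [Set.union_diff_cancel hST] at this
    have hinv : (cs.wordProd (subw S 0 sw))⁻¹ * cs.wordProd (subw T 0 sw) =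
        cs.wordProd (subw (T \ S) 0 sw) := by
      rw [hsplit, inv_mul_cancel_left]
    have hle1 : cs.length (cs.wordProd (subw (T \ S) 0 sw)) ≤ (subw (T \ S) 0 sw).length :=
      cs.length_wordProd_le _
    have htri : cs.length (cs.wordProd (subw T 0 sw)) ≤
        cs.length (cs.wordProd (subw S 0 sw)) +
          cs.length (cs.wordProd (subw (T \ S) 0 sw)) := by
      rw [hsplit]
      exact cs.length_mul_le _ _
    show cs.length _ + cs.length _ = cs.length _
    rw [hinv]
    omega
  -- membership detection by inversions
  have hTmem : ∀ (S : Set ℕ), HIdeal M sw S → ∀ a, a < sw.length →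
      (a ∈ S ↔ cs.length (Tt cs sw a * cs.wordProd (subw S 0 sw)) <
        cs.length (cs.wordProd (subw S 0 sw))) := by
    intro S hS a ha
    constructor
    · intro haS
      have hmul := Tt_mul_subw cs sw S a hS haS ha
      have hadd : (subw S 0 sw).length =
          (subw (S \ {a}) 0 sw).length + (subw {a} 0 sw).length := by
        have hdisj : ∀ k, k < sw.length → ¬((0+k) ∈ S \ {a} ∧ (0+k) ∈ ({a} : Set ℕ)) :=
          fun k _ h => h.1.2 h.2
        have := length_subw_add (S := S \ {a}) (T := {a}) sw 0 hdisj
        rwa [Set.diff_union_of_subset (by simpa using haS)] at this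
      have hsing : (subw {a} 0 sw).length = 1 :=
        subw_singleton_len sw 0 (by omega) (by omega)
      have hlenS : cs.length (cs.wordProd (subw S 0 sw)) = (subw S 0 sw).length :=
        len_subw cs hswred hS
      have hle := cs.length_wordProd_le (subw (S \ {a}) 0 sw)
      rw [hmul]
      omega
    · intro hlt
      by_contra haS
      have hmem := strong_exch_left cs (subw S 0 sw) (Tt cs sw a)
        (Tt_isReflection cs ha) hlt
      obtain ⟨b, hbS, hb, heq⟩ := mem_lis_subw cs sw S hS _ hmem
      have hab := Tt_inj cs hswred ha hb heq
      exact haS (by rwa [← hab] at hbS)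
  -- backward: weak order gives inclusion
  have hbwd : ∀ S T : Set ℕ, HIdeal M sw S → HIdeal M sw T →
      WeakLe cs (cs.wordProd (subw S 0 sw)) (cs.wordProd (subw T 0 sw)) →
      ∀ a, a < sw.length → a ∈ S → a ∈ T := by
    intro S T hS hT hw a ha haS
    have h1 := (hTmem S hS a ha).mp haS
    have hweq : cs.length (cs.wordProd (subw S 0 sw)) +
        cs.length ((cs.wordProd (subw S 0 sw))⁻¹ * cs.wordProd (subw T 0 sw)) =
        cs.length (cs.wordProd (subw T 0 sw)) := hw
    have hxx : Tt cs sw a * cs.wordProd (subw T 0 sw) =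
        (Tt cs sw a * cs.wordProd (subw S 0 sw)) *
          ((cs.wordProd (subw S 0 sw))⁻¹ * cs.wordProd (subw T 0 sw)) := by group
    have hlt2 : cs.length (Tt cs sw a * cs.wordProd (subw T 0 sw)) <
        cs.length (cs.wordProd (subw T 0 sw)) := by
      calc cs.length (Tt cs sw a * cs.wordProd (subw T 0 sw))
          = cs.length ((Tt cs sw a * cs.wordProd (subw S 0 sw)) *
            ((cs.wordProd (subw S 0 sw))⁻¹ * cs.wordProd (subw T 0 sw))) := by rw [hxx]
        _ ≤ cs.length (Tt cs sw a * cs.wordProd (subw S 0 sw)) +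
            cs.length ((cs.wordProd (subw S 0 sw))⁻¹ * cs.wordProd (subw T 0 sw)) :=
            cs.length_mul_le _ _
        _ < cs.length (cs.wordProd (subw S 0 sw)) +
            cs.length ((cs.wordProd (subw S 0 sw))⁻¹ * cs.wordProd (subw T 0 sw)) := by
            omega
        _ = cs.length (cs.wordProd (subw T 0 sw)) := hweq
    exact (hTmem T hT a ha).mpr hlt2
  have hIdealOf : ∀ I : {I : Set (Fin sw.length) // IsOrderIdeal M sw I},
      HIdeal M sw (liftSet I.1) := fun I => (isOrderIdeal_iff_HIdeal I.1).mp I.2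
  let f : {I : Set (Fin sw.length) // IsOrderIdeal M sw I} →
      {w : W // IsCSingleton cs cw w₀ w} :=
    fun I => ⟨cs.wordProd (subw (liftSet I.1) 0 sw),
      ⟨subw (liftSet I.1) 0 sw, rfl, len_subw cs hswred (hIdealOf I),
        sub_prefix M.symmetric sw _ (hIdealOf I)⟩⟩
  have horder : ∀ I J, I.val ⊆ J.val ↔ WeakLe cs (f I).val (f J).val := by
    intro I J
    constructor
    · intro hIJ
      apply hfwd _ _ (hIdealOf I) (hIdealOf J)
      rintro b ⟨hb, hbI⟩
      exact ⟨hb, hIJ hbI⟩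
    · intro hw a haI
      have h1 : (a : ℕ) ∈ liftSet I.1 := ⟨a.isLt, by simpa using haI⟩
      have h2 := hbwd _ _ (hIdealOf I) (hIdealOf J) hw a a.isLt h1
      obtain ⟨h, hJ⟩ := h2
      simpa using hJ
  have hinj : Function.Injective f := by
    intro I J hIJ
    have hIJval : (f I).val = (f J).val := by rw [hIJ]
    have hle1 : WeakLe cs (f I).val (f J).val := by
      rw [hIJval]
      show cs.length _ + cs.length _ = cs.length _
      rw [inv_mul_cancel, cs.length_one, add_zero]
    have hle2 : WeakLe cs (f J).val (f I).val := by
      rw [hIJval]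
      show cs.length _ + cs.length _ = cs.length _
      rw [inv_mul_cancel, cs.length_one, add_zero]
    have hsub1 := (horder I J).mpr hle1
    have hsub2 := (horder J I).mpr hle2
    exact Subtype.ext (Set.Subset.antisymm hsub1 hsub2)
  have hsurj : Function.Surjective f := by
    rintro ⟨v, u, hu, hured, v', hcomm, hpre⟩
    have hS₂ : HIdeal M v' {b | b < u.length} := by
      intro p q hpq hq
      exact lt_trans (hrel_lt hpq) hq
    obtain ⟨S, hS, hEq⟩ := transport hcomm {b | b < u.length} hS₂
    have hprod : cs.wordProd (subw S 0 sw) = v := by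
      rw [commEquiv_prod cs hEq]
      have htake : subw {b | b < u.length} 0 v' = v'.take u.length := by
        have := subw_lt u.length v' 0
        simpa using this
      rw [htake]
      obtain ⟨t, rfl⟩ := hpre
      rw [List.take_left]
      exact hu
    refine ⟨⟨{a : Fin sw.length | (a : ℕ) ∈ S}, ?_⟩, ?_⟩
    · rw [isOrderIdeal_iff_HIdeal]
      intro p q hpq hq
      obtain ⟨hqn, hqS⟩ := hq
      exact ⟨(hrel_bounds hpq).1, hS p q hpq hqS⟩
    · apply Subtype.ext
      show cs.wordProd (subw (liftSet {a : Fin sw.length | (a : ℕ) ∈ S}) 0 sw) = v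
      rw [← hprod]
      have hcongr : subw (liftSet {a : Fin sw.length | (a : ℕ) ∈ S}) 0 sw =
          subw S 0 sw := by
        apply subw_congr
        intro k hk
        simp only [Nat.zero_add]
        constructor
        · rintro ⟨h, hmem⟩
          exact hmem
        · intro hmem
          exact ⟨hk, hmem⟩
      rw [hcongr]
  exact ⟨Equiv.ofBijective f ⟨hinj, hsurj⟩, fun I J => horder I J⟩

end Cambrian
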